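/- The set ℤ × F₂ equipped with the binary operation (m₁,f₁) • (m₂,f₂) := (2m₁m₂ + m₁ + m₂, f₁ · E_{m₁,f₁}(f₂)) is a monoid with identity element (0, 1), where E_{m,f} is the endomorphism of F₂ sending x ↦ x^{2m+1} and y ↦ f⁻¹y^{2m+1}f. -/
import Mathlib


abbrev F2 := FreeGroup (Fin 2)
def xx : F2 := FreeGroup.of 0
def yy : F2 := FreeGroup.of 1

/-- The endomorphism E_{m,f} of F₂ sending x ↦ x^{2m+1}, y ↦ f⁻¹y^{2m+1}f. -/
def Emap (m : ℤ) (f : F2) : F2 →* F2 :=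
  FreeGroup.lift ![xx ^ (2 * m + 1), f⁻¹ * yy ^ (2 * m + 1) * f]

/-- The binary operation • on ℤ × F₂. -/
def star (a b : ℤ × F2) : ℤ × F2 :=
  (2 * a.1 * b.1 + a.1 + b.1, a.2 * Emap a.1 a.2 b.2)

lemma Emap_xx (m : ℤ) (f : F2) : Emap m f xx = xx ^ (2 * m + 1) := by
  simp [Emap, xx]

lemma Emap_yy (m : ℤ) (f : F2) : Emap m f yy = f⁻¹ * yy ^ (2 * m + 1) * f := by
  simp [Emap, yy]

lemma Emap_comp (m₁ m₂ : ℤ) (f₁ f₂ : F2) :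
    (Emap m₁ f₁).comp (Emap m₂ f₂) =
      Emap (2 * m₁ * m₂ + m₁ + m₂) (f₁ * Emap m₁ f₁ f₂) := by
  apply FreeGroup.ext_hom
  intro i
  fin_cases i
  · show (Emap m₁ f₁).comp (Emap m₂ f₂) xx =
        Emap (2 * m₁ * m₂ + m₁ + m₂) (f₁ * Emap m₁ f₁ f₂) xx
    rw [MonoidHom.comp_apply, Emap_xx, map_zpow, Emap_xx, Emap_xx, ← zpow_mul]
    ring_nf
  · show (Emap m₁ f₁).comp (Emap m₂ f₂) yy =
        Emap (2 * m₁ * m₂ + m₁ + m₂) (f₁ * Emap m₁ f₁ f₂) yy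
    rw [MonoidHom.comp_apply, Emap_yy, Emap_yy, map_mul, map_mul, map_inv,
      map_zpow, Emap_yy]
    have hc : ∀ (a b : F2) (n : ℤ), (a⁻¹ * b * a) ^ n = a⁻¹ * b ^ n * a := by
      intro a b n; simpa using conj_zpow (i := n) (a := a⁻¹) (b := b)
    rw [hc, ← zpow_mul,
      show (2 * m₁ + 1) * (2 * m₂ + 1) = 2 * (2 * m₁ * m₂ + m₁ + m₂) + 1 by ring,
      mul_inv_rev]
    group

/-- (ℤ × F₂, •) is a monoid with identity (0,1). -/
theorem star_monoid :
    (∀ a b c : ℤ × F2, star (star a b) c = star a (star b c)) ∧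
    (∀ a : ℤ × F2, star (0, 1) a = a) ∧
    (∀ a : ℤ × F2, star a (0, 1) = a) := by
  have hid : Emap 0 1 = MonoidHom.id F2 := by
    apply FreeGroup.ext_hom
    intro i
    fin_cases i
    · show Emap 0 1 xx = xx
      rw [Emap_xx]; norm_num
    · show Emap 0 1 yy = yy
      rw [Emap_yy]; norm_num
  refine ⟨?_, ?_, ?_⟩
  · rintro ⟨m₁, f₁⟩ ⟨m₂, f₂⟩ ⟨m₃, f₃⟩
    simp only [_root_.star, Prod.mk.injEq]
    constructor
    · ring
    · rw [map_mul, ← Emap_comp, MonoidHom.comp_apply, mul_assoc]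
  · rintro ⟨m, f⟩
    simp [_root_.star, hid]
  · rintro ⟨m, f⟩
    simp [_root_.star]
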